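/- Let ξ be a real irrational number with 0 < ξ < 1, let μ > μ(ξ), and let (Q_n), (ε_n) be sequences of positive real numbers with Q_n → +∞, ε_n → 0 and ε_n ≥ Q_n^{−1/(μ−1)+o(1)}. Let (η_n) be any sequence of positive reals with η_n → 0 and η_n = ε_n^{o(1)}. Then for all sufficiently large n there exist integers p_n and q_n such that Q_n/√(1+η_n) ≤ q_n ≤ Q_n·√(1+η_n) and ε_n/√(1+2η_n) ≤ q_n ξ − p_n ≤ ε_n·√(1+2η_n). -/

import Mathlib

open Filter Topology

/-- The irrationality exponent of a real number, as an extended real: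
the infimum of all real `μ` such that `|ξ - p/q| > 1/q^μ` for all integers `p, q`
with `q` sufficiently large (`⊤` if no such real `μ` exists). -/
noncomputable def irrationalityExponent (ξ : ℝ) : EReal :=
  sInf {x : EReal | ∃ μ : ℝ, x = (μ : EReal) ∧
    ∀ᶠ q : ℕ in atTop, ∀ p : ℤ, |ξ - (p : ℝ) / (q : ℝ)| > 1 / (q : ℝ) ^ μ}

private lemma exists_int_step (t θ : ℝ) (hθ : θ ≠ 0) :
    ∃ a : ℤ, t ≤ (a : ℝ) * θ ∧ (a : ℝ) * θ ≤ t + |θ| ∧ |(a : ℝ)| ≤ |t| / |θ| + 1 := by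
  have habsdiv : |t / θ| = |t| / |θ| := abs_div t θ
  rcases hθ.lt_or_gt with h | h
  · refine ⟨⌊t / θ⌋, ?_, ?_, ?_⟩
    · have h1 : (⌊t / θ⌋ : ℝ) ≤ t / θ := Int.floor_le _
      have h2 : t / θ * θ = t := div_mul_cancel₀ t hθ
      nlinarith [mul_le_mul_of_nonpos_right h1 h.le]
    · have h1 : t / θ - 1 < (⌊t / θ⌋ : ℝ) := Int.sub_one_lt_floor _
      have h2 : t / θ * θ = t := div_mul_cancel₀ t hθ
      have h3 : |θ| = -θ := abs_of_neg h
      nlinarith [mul_lt_mul_of_neg_right h1 h]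
    · have h1 : (⌊t / θ⌋ : ℝ) ≤ t / θ := Int.floor_le _
      have h2 : t / θ - 1 < (⌊t / θ⌋ : ℝ) := Int.sub_one_lt_floor _
      have h3 : -|t / θ| ≤ t / θ := neg_abs_le _
      have h4 : t / θ ≤ |t / θ| := le_abs_self _
      rw [abs_le]
      constructor <;> [skip; skip] <;> rw [← habsdiv] <;> linarith
  · refine ⟨⌈t / θ⌉, ?_, ?_, ?_⟩
    · have h1 : t / θ ≤ (⌈t / θ⌉ : ℝ) := Int.le_ceil _
      have h2 : t / θ * θ = t := div_mul_cancel₀ t hθ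
      nlinarith [mul_le_mul_of_nonneg_right h1 h.le]
    · have h1 : (⌈t / θ⌉ : ℝ) < t / θ + 1 := Int.ceil_lt_add_one _
      have h2 : t / θ * θ = t := div_mul_cancel₀ t hθ
      have h3 : |θ| = θ := abs_of_pos h
      nlinarith [mul_lt_mul_of_pos_right h1 h]
    · have h1 : t / θ ≤ (⌈t / θ⌉ : ℝ) := Int.le_ceil _
      have h2 : (⌈t / θ⌉ : ℝ) < t / θ + 1 := Int.ceil_lt_add_one _
      have h3 : -|t / θ| ≤ t / θ := neg_abs_le _
      have h4 : t / θ ≤ |t / θ| := le_abs_self _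
      rw [abs_le]
      constructor <;> rw [← habsdiv] <;> linarith

set_option maxHeartbeats 1000000 in
private lemma construction (ξ Q ε η : ℝ) (hQ : 0 < Q) (hε : 0 < ε) (hη : 0 < η) (hη1 : η ≤ 1)
    (qX pX : ℤ) (hqX : 0 < qX) (hθX0 : (qX : ℝ) * ξ - pX ≠ 0)
    (hθXs : |(qX : ℝ) * ξ - pX| ≤ ε * η / 3)
    (hXcost : (2 * ε / |(qX : ℝ) * ξ - pX| + 1) * qX ≤ Q * η / 12)
    (qY pY : ℤ) (hqY : 0 < qY) (hYq : (qY : ℝ) ≤ Q * η / 12)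
    (hYdisp : ((Q + Q * η / 6) / qY + 1) * |(qY : ℝ) * ξ - pY| ≤ ε * η / 3) :
    ∃ p q : ℤ, Q / Real.sqrt (1 + η) ≤ (q : ℝ) ∧ (q : ℝ) ≤ Q * Real.sqrt (1 + η) ∧
      ε / Real.sqrt (1 + 2 * η) ≤ (q : ℝ) * ξ - (p : ℝ) ∧
      (q : ℝ) * ξ - (p : ℝ) ≤ ε * Real.sqrt (1 + 2 * η) := by
  set θX : ℝ := (qX : ℝ) * ξ - pX with hθXdef
  set θY : ℝ := (qY : ℝ) * ξ - pY with hθYdef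
  have hqXR : (0 : ℝ) < qX := by exact_mod_cast hqX
  have hqYR : (0 : ℝ) < qY := by exact_mod_cast hqY
  have hθXpos : 0 < |θX| := abs_pos.mpr hθX0
  set x₀ : ℝ := Q + Q * η / 6 with hx₀def
  clear_value θX θY x₀
  have hx₀pos : 0 < x₀ := by rw [hx₀def]; positivity
  obtain ⟨b, hb1, hb2⟩ : ∃ b : ℤ, x₀ / (qY : ℝ) ≤ (b : ℝ) ∧ (b : ℝ) < x₀ / (qY : ℝ) + 1 :=
    ⟨⌈x₀ / (qY : ℝ)⌉, Int.le_ceil _, Int.ceil_lt_add_one _⟩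
  have hbnn : (0 : ℝ) ≤ b := le_trans (by positivity) hb1
  have hdm : x₀ / (qY : ℝ) * (qY : ℝ) = x₀ := div_mul_cancel₀ x₀ (ne_of_gt hqYR)
  have hbqY_lo : x₀ ≤ (b : ℝ) * qY := by
    have := mul_le_mul_of_nonneg_right hb1 hqYR.le
    rw [hdm] at this; exact this
  have hbqY_hi : (b : ℝ) * qY ≤ x₀ + Q * η / 12 := by
    have := mul_le_mul_of_nonneg_right hb2.le hqYR.le
    rw [add_mul, one_mul, hdm] at this
    linarith [this, hYq]
  have hbθY : |(b : ℝ) * θY| ≤ ε * η / 3 := by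
    rw [abs_mul, abs_of_nonneg hbnn]
    calc (b : ℝ) * |θY| ≤ (x₀ / (qY : ℝ) + 1) * |θY| :=
          mul_le_mul_of_nonneg_right hb2.le (abs_nonneg _)
      _ ≤ ε * η / 3 := hYdisp
  obtain ⟨a, ha1, ha2, ha3⟩ := exists_int_step (ε - (b : ℝ) * θY) θX hθX0
  have haqX : |(a : ℝ) * qX| ≤ Q * η / 12 := by
    have h1 : |ε - (b : ℝ) * θY| ≤ 2 * ε := by
      have := abs_sub (ε) ((b : ℝ) * θY)
      have h2 : |ε| = ε := abs_of_pos hε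
      have h3 : ε * η / 3 ≤ ε := by nlinarith
      calc |ε - (b : ℝ) * θY| ≤ |ε| + |(b : ℝ) * θY| := abs_sub _ _
        _ ≤ 2 * ε := by rw [h2]; linarith
    have h4 : |(a : ℝ)| ≤ 2 * ε / |θX| + 1 := by
      refine le_trans ha3 ?_
      gcongr
    rw [abs_mul, abs_of_pos hqXR]
    calc |(a : ℝ)| * qX ≤ (2 * ε / |θX| + 1) * qX := mul_le_mul_of_nonneg_right h4 hqXR.le
      _ ≤ Q * η / 12 := hXcost
  have hq_cast : ((b * qY + a * qX : ℤ) : ℝ) = (b : ℝ) * qY + (a : ℝ) * qX := by push_cast; ring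
  have hp_cast : ((b * pY + a * pX : ℤ) : ℝ) = (b : ℝ) * pY + (a : ℝ) * pX := by push_cast; ring
  have hkey : ((b : ℝ) * qY + (a : ℝ) * qX) * ξ - ((b : ℝ) * pY + (a : ℝ) * pX)
      = (b : ℝ) * θY + (a : ℝ) * θX := by rw [hθXdef, hθYdef]; ring
  have haqX1 : -(Q * η / 12) ≤ (a : ℝ) * qX := neg_le_of_abs_le haqX
  have haqX2 : (a : ℝ) * qX ≤ Q * η / 12 := le_of_abs_le haqX
  have hs_lo : Q ≤ (b : ℝ) * qY + (a : ℝ) * qX := by rw [hx₀def] at hbqY_lo; linarith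
  have hs_hi : (b : ℝ) * qY + (a : ℝ) * qX ≤ Q * (1 + η / 3) := by
    rw [hx₀def] at hbqY_hi; linarith
  have hd_lo : ε ≤ (b : ℝ) * θY + (a : ℝ) * θX := by linarith
  have hd_hi : (b : ℝ) * θY + (a : ℝ) * θX ≤ ε * (1 + η / 3) := by
    have h5 : |θX| ≤ ε * η / 3 := hθXs
    linarith
  have hsq1 : 1 ≤ Real.sqrt (1 + η) := Real.one_le_sqrt.mpr (by linarith)
  have hsq2 : 1 + η / 3 ≤ Real.sqrt (1 + η) := by
    rw [Real.le_sqrt (by positivity) (by positivity)]; nlinarith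
  have hsq3 : 1 ≤ Real.sqrt (1 + 2 * η) := Real.one_le_sqrt.mpr (by linarith)
  have hsq4 : 1 + η / 3 ≤ Real.sqrt (1 + 2 * η) := by
    rw [Real.le_sqrt (by positivity) (by positivity)]; nlinarith
  refine ⟨b * pY + a * pX, b * qY + a * qX, ?_, ?_, ?_, ?_⟩
  · rw [hq_cast]
    exact le_trans (div_le_self hQ.le hsq1) hs_lo
  · rw [hq_cast]
    refine le_trans hs_hi ?_
    exact mul_le_mul_of_nonneg_left hsq2 hQ.le
  · rw [hq_cast, hp_cast, hkey]
    exact le_trans (div_le_self hε.le hsq3) hd_lo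
  · rw [hq_cast, hp_cast, hkey]
    refine le_trans hd_hi ?_
    exact mul_le_mul_of_nonneg_left hsq4 hε.le

private lemma eventually_const_rpow_le (Q : ℕ → ℝ) (hQ : Tendsto Q atTop atTop) (c : ℝ)
    {e d : ℝ} (hed : e < d) :
    ∀ᶠ n in atTop, c * Q n ^ e ≤ Q n ^ d := by
  have h1 : Tendsto (fun n => Q n ^ (d - e)) atTop atTop :=
    (tendsto_rpow_atTop (by linarith)).comp hQ
  filter_upwards [h1.eventually_ge_atTop c, hQ.eventually_gt_atTop 0] with n h2 h3
  calc c * Q n ^ e ≤ Q n ^ (d - e) * Q n ^ e :=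
        mul_le_mul_of_nonneg_right h2 (Real.rpow_nonneg h3.le e)
    _ = Q n ^ d := by rw [← Real.rpow_add h3]; congr 1; ring

private lemma scale_pair (ξ : ℝ) (ν : ℝ) (N : ℕ) (c₀ : ℝ)
    (hC : ∀ q : ℤ, (N : ℤ) ≤ q → ∀ p : ℤ, (q : ℝ) ^ ((1 : ℝ) - ν) < |(q : ℝ) * ξ - p|)
    (hsmall : ∀ q : ℤ, 0 < q → ∀ p : ℤ, |(q : ℝ) * ξ - p| < c₀ → (N : ℤ) ≤ q)
    (X : ℝ) (hX1 : 1 ≤ X) (hXc : 1 / (X + 1) < c₀) :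
    ∃ q p : ℤ, 0 < q ∧ (q : ℝ) ≤ X + 1 ∧ (q : ℝ) ^ ((1 : ℝ) - ν) < |(q : ℝ) * ξ - p| ∧
      |(q : ℝ) * ξ - p| ≤ 1 / (X + 1) := by
  have hm : 0 < ⌈X⌉₊ := Nat.ceil_pos.mpr (lt_of_lt_of_le one_pos hX1)
  obtain ⟨p, q, hq0, hqm, hθ⟩ := Real.exists_int_int_abs_mul_sub_le ξ hm
  have hXm : X ≤ (⌈X⌉₊ : ℝ) := Nat.le_ceil X
  have hm1 : (⌈X⌉₊ : ℝ) < X + 1 := Nat.ceil_lt_add_one (by linarith)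
  have hq_le : (q : ℝ) ≤ X + 1 := by
    have h : (q : ℝ) ≤ ((⌈X⌉₊ : ℤ) : ℝ) := by exact_mod_cast hqm
    push_cast at h; linarith
  have hθ' : |(q : ℝ) * ξ - p| ≤ 1 / (X + 1) := by
    refine le_trans hθ (one_div_le_one_div_of_le (by linarith) (by linarith))
  have hqN : (N : ℤ) ≤ q := hsmall q hq0 p (lt_of_le_of_lt hθ' hXc)
  exact ⟨q, p, hq0, hq_le, hC q hqN p, hθ'⟩

set_option maxHeartbeats 2000000 in
theorem eventually_exists_good_approximation (ξ : ℝ) (hξ : Irrational ξ)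
    (hξ0 : 0 < ξ) (hξ1 : ξ < 1)
    (μ : ℝ) (hμ : irrationalityExponent ξ < (μ : EReal))
    (Q ε : ℕ → ℝ) (hQpos : ∀ n, 0 < Q n) (hεpos : ∀ n, 0 < ε n)
    (hQ : Tendsto Q atTop atTop) (hε : Tendsto ε atTop (𝓝 0))
    (hlb : ∃ δ : ℕ → ℝ, Tendsto δ atTop (𝓝 0) ∧
      ∀ n, ε n ≥ Q n ^ (-(1 / (μ - 1)) + δ n))
    (η : ℕ → ℝ) (hηpos : ∀ n, 0 < η n) (hη : Tendsto η atTop (𝓝 0))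
    (hηε : ∃ δ : ℕ → ℝ, Tendsto δ atTop (𝓝 0) ∧ ∀ n, η n = ε n ^ δ n) :
    ∀ᶠ n in atTop, ∃ p q : ℤ,
      Q n / Real.sqrt (1 + η n) ≤ (q : ℝ) ∧ (q : ℝ) ≤ Q n * Real.sqrt (1 + η n) ∧
      ε n / Real.sqrt (1 + 2 * η n) ≤ (q : ℝ) * ξ - (p : ℝ) ∧
      (q : ℝ) * ξ - (p : ℝ) ≤ ε n * Real.sqrt (1 + 2 * η n) := by
  -- Step 1 : extract an exponent ν with the eventual approximation property
  rw [irrationalityExponent] at hμ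
  obtain ⟨x, hxS, hxμ⟩ := sInf_lt_iff.mp hμ
  obtain ⟨ν, rfl, hev⟩ := hxS
  rw [EReal.coe_lt_coe_iff] at hxμ
  obtain ⟨N₁, hN₁⟩ := eventually_atTop.mp hev
  set N : ℕ := max N₁ 2 with hNdef
  have hN2 : 2 ≤ N := le_max_right _ _
  have hNN₁ : N₁ ≤ N := le_max_left _ _
  have hNpos : (0 : ℤ) < (N : ℤ) := by exact_mod_cast lt_of_lt_of_le (by norm_num) hN2
  have hC : ∀ q : ℤ, (N : ℤ) ≤ q → ∀ p : ℤ, (q : ℝ) ^ ((1 : ℝ) - ν) < |(q : ℝ) * ξ - p| := by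
    intro q hq p
    have hq0 : 0 < q := lt_of_lt_of_le hNpos hq
    have hqR : (0 : ℝ) < (q : ℝ) := by exact_mod_cast hq0
    have hk : ((q.toNat : ℕ) : ℤ) = q := Int.toNat_of_nonneg hq0.le
    have hkN : N ≤ q.toNat := by omega
    have h := hN₁ q.toNat (le_trans hNN₁ hkN) p
    have hcast : ((q.toNat : ℕ) : ℝ) = (q : ℝ) := by exact_mod_cast congrArg (Int.cast : ℤ → ℝ) hk
    rw [hcast] at h
    have key : (q : ℝ) * (ξ - p / q) = (q : ℝ) * ξ - p := by field_simp
    rw [← key, abs_mul, abs_of_pos hqR]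
    have h2 : (q : ℝ) ^ ((1 : ℝ) - ν) = (q : ℝ) * ((q : ℝ) ^ ν)⁻¹ := by
      rw [show (1 : ℝ) - ν = 1 + -ν by ring, Real.rpow_add hqR, Real.rpow_one,
        Real.rpow_neg hqR.le]
    rw [h2]
    rw [gt_iff_lt, one_div] at h
    exact (mul_lt_mul_iff_right₀ hqR).mpr h
  -- Step 2 : a positive lower bound for |qξ - p| for small q
  have hne : (Finset.Ico 1 N).Nonempty := ⟨1, by rw [Finset.mem_Ico]; omega⟩
  set c₀ : ℝ := (Finset.Ico 1 N).inf' hne (fun k => |(k : ℝ) * ξ - round ((k : ℝ) * ξ)|)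
    with hc₀def
  have hc₀pos : 0 < c₀ := by
    rw [hc₀def, Finset.lt_inf'_iff]
    intro k hk
    rw [Finset.mem_Ico] at hk
    have hk0 : k ≠ 0 := by omega
    have hirr : Irrational ((k : ℝ) * ξ) := hξ.natCast_mul hk0
    exact abs_pos.mpr (sub_ne_zero.mpr (hirr.ne_int (round ((k : ℝ) * ξ))))
  have hsmall : ∀ q : ℤ, 0 < q → ∀ p : ℤ, |(q : ℝ) * ξ - p| < c₀ → (N : ℤ) ≤ q := by
    intro q hq p habs
    by_contra hlt
    push_neg at hlt
    have hk : q.toNat ∈ Finset.Ico 1 N := by rw [Finset.mem_Ico]; omega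
    have h1 : c₀ ≤ |(q.toNat : ℝ) * ξ - round ((q.toNat : ℝ) * ξ)| := Finset.inf'_le _ hk
    have h2 : |(q.toNat : ℝ) * ξ - round ((q.toNat : ℝ) * ξ)| ≤ |(q.toNat : ℝ) * ξ - p| :=
      round_le _ p
    have hcast : ((q.toNat : ℕ) : ℝ) = (q : ℝ) := by
      exact_mod_cast congrArg (Int.cast : ℤ → ℝ) (Int.toNat_of_nonneg hq.le)
    rw [hcast] at h1 h2
    linarith
  -- Step 3 : ν > 2
  have hν2 : 2 < ν := by
    set m : ℕ := max N ⌈1 / c₀⌉₊ with hmdef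
    have hm0 : 0 < m := lt_of_lt_of_le (by norm_num) (le_trans hN2 (le_max_left _ _))
    obtain ⟨p, q, hq0, hqm, hθ⟩ := Real.exists_int_int_abs_mul_sub_le ξ hm0
    have hcc : 1 / ((m : ℝ) + 1) < c₀ := by
      have h1 : 1 / c₀ ≤ (⌈1 / c₀⌉₊ : ℝ) := Nat.le_ceil _
      have h2 : (⌈1 / c₀⌉₊ : ℝ) ≤ (m : ℝ) := by exact_mod_cast le_max_right N _
      rw [div_lt_iff₀ (by positivity)]
      rw [div_le_iff₀ hc₀pos] at h1
      nlinarith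
    have hqN := hsmall q hq0 p (lt_of_le_of_lt hθ hcc)
    have hbig := hC q hqN p
    have hqR : (0 : ℝ) < (q : ℝ) := by exact_mod_cast hq0
    have hq2 : (2 : ℝ) ≤ (q : ℝ) := by
      have h3 : ((2 : ℕ) : ℤ) ≤ (N : ℤ) := by exact_mod_cast hN2
      exact_mod_cast le_trans h3 hqN
    have hqm' : (q : ℝ) ≤ (m : ℝ) := by exact_mod_cast hqm
    have h4 : (q : ℝ) ^ ((1 : ℝ) - ν) < (q : ℝ) ^ (-1 : ℝ) := by
      rw [Real.rpow_neg_one]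
      refine lt_of_lt_of_le hbig (le_trans hθ ?_)
      rw [one_div]
      exact inv_anti₀ hqR (by linarith)
    have h5 := (Real.rpow_lt_rpow_left_iff (by linarith : (1 : ℝ) < (q : ℝ))).mp h4
    linarith
  -- Step 4 : numeric constants
  have hμ2 : 2 < μ := lt_trans hν2 hxμ
  have hν1 : (1 : ℝ) < ν := by linarith
  have hν0 : (0 : ℝ) < ν := by linarith
  set β : ℝ := 1 / (μ - 1) with hβdef
  have hβpos : 0 < β := by rw [hβdef]; exact one_div_pos.mpr (by linarith)
  have hβ1 : β < 1 := by rw [hβdef, div_lt_one (by linarith)]; linarith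
  set κ : ℝ := (ν - 1) / ν with hκdef
  have hκpos : 0 < κ := by rw [hκdef]; exact div_pos (by linarith) hν0
  have hκ1 : κ < 1 := by rw [hκdef, div_lt_one hν0]; linarith
  have hg₁ : β * (ν - 1) < 1 := by
    rw [hβdef, div_mul_eq_mul_div, div_lt_one (by linarith)]; linarith
  have hg₃ : (1 + β) * κ < 1 := by
    have hμ1 : μ - 1 ≠ 0 := by linarith
    have h1 : 1 + β = μ / (μ - 1) := by
      rw [hβdef]; field_simp; ring
    rw [h1, hκdef, div_mul_div_comm, div_lt_one (by nlinarith)]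
    nlinarith
  set g : ℝ := min (1 - β * (ν - 1)) (min (1 - β) (1 - (1 + β) * κ)) with hgdef
  have hgpos : 0 < g := lt_min (by linarith) (lt_min (by linarith) (by linarith))
  have hg_le₁ : g ≤ 1 - β * (ν - 1) := min_le_left _ _
  have hg_le₂ : g ≤ 1 - β := le_trans (min_le_right _ _) (min_le_left _ _)
  have hg_le₃ : g ≤ 1 - (1 + β) * κ := le_trans (min_le_right _ _) (min_le_right _ _)
  set τ : ℝ := g / (4 * ν) with hτdef
  have hτpos : 0 < τ := by rw [hτdef]; exact div_pos hgpos (by linarith)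
  have hτν : τ * ν = g / 4 := by
    rw [hτdef, div_mul_eq_mul_div, mul_comm (4:ℝ) ν, ← div_div, mul_div_assoc,
      div_self (ne_of_gt hν0), mul_one]
  set e₁ : ℝ := (β + τ) * (ν - 1) + τ * ν with he₁def
  set e₂ : ℝ := β + 2 * τ with he₂def
  set e₃ : ℝ := (1 + e₂) * κ with he₃def
  have hτsmall : 3 * τ < g := by nlinarith [mul_pos hτpos (by linarith : (0 : ℝ) < ν - 2)]
  have he₁lt : e₁ < 1 - τ := by rw [he₁def]; nlinarith
  have he₂lt : e₂ < 1 - τ := by rw [he₂def]; nlinarith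
  have he₃lt : e₃ < 1 - τ := by
    rw [he₃def, he₂def]
    nlinarith [mul_nonneg hτpos.le (by linarith : (0 : ℝ) ≤ 1 - κ)]
  -- Step 5 : sequences and eventual bounds
  obtain ⟨δ, hδ0, hδ⟩ := hlb
  obtain ⟨δ', hδ'0, hδ'⟩ := hηε
  have hεηpos : ∀ n, 0 < ε n * η n := fun n => mul_pos (hεpos n) (hηpos n)
  set X : ℕ → ℝ := fun n => 3 * (ε n * η n)⁻¹ with hXdef
  set W : ℕ → ℝ := fun n => 6 * (Q n * (ε n * η n)⁻¹) with hWdef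
  set Y : ℕ → ℝ := fun n => W n ^ κ with hYdef
  have hεη0 : Tendsto (fun n => ε n * η n) atTop (𝓝[>] 0) :=
    tendsto_nhdsWithin_iff.mpr ⟨by simpa using hε.mul hη,
      Eventually.of_forall fun n => hεηpos n⟩
  have hinv : Tendsto (fun n => (ε n * η n)⁻¹) atTop atTop := hεη0.inv_tendsto_nhdsGT_zero
  have hXtop : Tendsto X atTop atTop := Tendsto.const_mul_atTop (by norm_num) hinv
  have hWtop : Tendsto W atTop atTop :=
    Tendsto.const_mul_atTop (by norm_num) (hQ.atTop_mul_atTop₀ hinv)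
  have hYtop : Tendsto Y atTop atTop := (tendsto_rpow_atTop hκpos).comp hWtop
  have F0 : ∀ᶠ n in atTop, 1 ≤ Q n := hQ.eventually_ge_atTop 1
  have F1 : ∀ᶠ n in atTop, ε n ≤ 1 := (hε.eventually (gt_mem_nhds one_pos)).mono
    fun n h => h.le
  have F2 : ∀ᶠ n in atTop, η n ≤ 1 := (hη.eventually (gt_mem_nhds one_pos)).mono
    fun n h => h.le
  have F3 : ∀ᶠ n in atTop, -τ ≤ δ n :=
    (hδ0.eventually (lt_mem_nhds (neg_lt_zero.mpr hτpos))).mono fun n h => h.le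
  have F4 : ∀ᶠ n in atTop, |δ' n| ≤ τ / (β + τ) := by
    have h := (NormedAddCommGroup.tendsto_nhds_zero.mp hδ'0) (τ / (β + τ)) (by positivity)
    exact h.mono fun n hh => by rw [Real.norm_eq_abs] at hh; linarith
  have E_ε : ∀ᶠ n in atTop, Q n ^ (-(β + τ)) ≤ ε n := by
    filter_upwards [F0, F3] with n h0 h3
    exact le_trans (Real.rpow_le_rpow_of_exponent_le h0 (by linarith)) (hδ n)
  have E_εinv : ∀ᶠ n in atTop, (ε n)⁻¹ ≤ Q n ^ (β + τ) := by
    filter_upwards [E_ε, hQ.eventually_gt_atTop 0] with n h1 h0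
    have h3 := inv_anti₀ (Real.rpow_pos_of_pos h0 _) h1
    rwa [← Real.rpow_neg h0.le, neg_neg] at h3
  have E_η : ∀ᶠ n in atTop, Q n ^ (-τ) ≤ η n := by
    filter_upwards [F0, F1, E_ε, F4] with n h0 h1 h2 h4
    have hQn : (0 : ℝ) < Q n := lt_of_lt_of_le one_pos h0
    have k0 : (β + τ) * |δ' n| ≤ τ := by
      calc (β + τ) * |δ' n| ≤ (β + τ) * (τ / (β + τ)) := by
            exact mul_le_mul_of_nonneg_left h4 (by positivity)
        _ = τ := by field_simp
    have k1 : Q n ^ (-τ) ≤ Q n ^ (-(β + τ) * |δ' n|) :=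
      Real.rpow_le_rpow_of_exponent_le h0 (by nlinarith)
    have k2 : Q n ^ (-(β + τ) * |δ' n|) = (Q n ^ (-(β + τ))) ^ |δ' n| :=
      Real.rpow_mul hQn.le _ _
    have k3 : (Q n ^ (-(β + τ))) ^ |δ' n| ≤ ε n ^ |δ' n| :=
      Real.rpow_le_rpow (Real.rpow_nonneg hQn.le _) h2 (abs_nonneg _)
    have k4 : ε n ^ |δ' n| ≤ ε n ^ δ' n :=
      Real.rpow_le_rpow_of_exponent_ge (hεpos n) h1 (le_abs_self _)
    rw [hδ' n]
    calc Q n ^ (-τ) ≤ (Q n ^ (-(β + τ))) ^ |δ' n| := by rw [← k2]; exact k1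
      _ ≤ ε n ^ |δ' n| := k3
      _ ≤ ε n ^ δ' n := k4
  have E_ηinv : ∀ᶠ n in atTop, (η n)⁻¹ ≤ Q n ^ τ := by
    filter_upwards [E_η, hQ.eventually_gt_atTop 0] with n h1 h0
    have h3 := inv_anti₀ (Real.rpow_pos_of_pos h0 _) h1
    rwa [← Real.rpow_neg h0.le, neg_neg] at h3
  have E_Qη : ∀ᶠ n in atTop, Q n ^ ((1 : ℝ) - τ) ≤ Q n * η n := by
    filter_upwards [E_η, hQ.eventually_gt_atTop 0] with n h1 h0
    have h2 : Q n ^ ((1 : ℝ) - τ) = Q n * Q n ^ (-τ) := by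
      rw [show (1 : ℝ) - τ = 1 + -τ by ring, Real.rpow_add h0, Real.rpow_one]
    rw [h2]
    exact mul_le_mul_of_nonneg_left h1 h0.le
  have H1 : ∀ᶠ n in atTop, (48 * (4 : ℝ) ^ ν) * Q n ^ e₁ ≤ Q n ^ ((1 : ℝ) - τ) :=
    eventually_const_rpow_le Q hQ _ he₁lt
  have H2 : ∀ᶠ n in atTop, 96 * Q n ^ e₂ ≤ Q n ^ ((1 : ℝ) - τ) :=
    eventually_const_rpow_le Q hQ _ he₂lt
  have H3 : ∀ᶠ n in atTop, (12 * ((6 : ℝ) ^ κ + 1)) * Q n ^ e₃ ≤ Q n ^ ((1 : ℝ) - τ) :=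
    eventually_const_rpow_le Q hQ _ he₃lt
  have G1 : ∀ᶠ n in atTop, 1 ≤ X n := hXtop.eventually_ge_atTop 1
  have G2 : ∀ᶠ n in atTop, 1 / (X n + 1) < c₀ := by
    filter_upwards [hXtop.eventually_ge_atTop (1 / c₀), hXtop.eventually_ge_atTop 0]
      with n h1 h2
    rw [div_lt_iff₀ (by linarith)]
    rw [div_le_iff₀ hc₀pos] at h1
    nlinarith [h1, hc₀pos]
  have G3 : ∀ᶠ n in atTop, 1 ≤ Y n := hYtop.eventually_ge_atTop 1
  have G4 : ∀ᶠ n in atTop, 1 / (Y n + 1) < c₀ := by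
    filter_upwards [hYtop.eventually_ge_atTop (1 / c₀), hYtop.eventually_ge_atTop 0]
      with n h1 h2
    rw [div_lt_iff₀ (by linarith)]
    rw [div_le_iff₀ hc₀pos] at h1
    nlinarith [h1, hc₀pos]
  have he₂0 : (0 : ℝ) ≤ e₂ := by rw [he₂def]; linarith
  have G5 : ∀ᶠ n in atTop, 2 * ε n * (X n + 1) ^ ν + (X n + 1) ≤ Q n * η n / 12 := by
    filter_upwards [E_εinv, E_ηinv, F0, F1, F2, H1, H2, E_Qη, hQ.eventually_gt_atTop 0]
      with n hεi hηi h0 hε1 hη1 h1 h2 hqη hQn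
    have hεn := hεpos n
    have hηn := hηpos n
    have hA0 : (0 : ℝ) < (ε n * η n)⁻¹ := by positivity
    have hA1 : 1 ≤ (ε n * η n)⁻¹ :=
      (one_le_inv₀ (hεηpos n)).mpr (mul_le_one₀ hε1 hηn.le hη1)
    have hXA : X n + 1 ≤ 4 * (ε n * η n)⁻¹ := by
      simp only [hXdef]; linarith
    have hAb : (ε n * η n)⁻¹ ≤ Q n ^ e₂ := by
      rw [mul_inv, he₂def, show β + 2 * τ = (β + τ) + τ by ring, Real.rpow_add hQn]
      exact mul_le_mul hεi hηi (by positivity) (Real.rpow_nonneg hQn.le _)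
    have t2 : X n + 1 ≤ 4 * Q n ^ e₂ := le_trans hXA (by linarith)
    have hXpos : (0 : ℝ) ≤ X n + 1 := by simp only [hXdef]; positivity
    have p1 : (X n + 1) ^ ν ≤ (4 * (ε n * η n)⁻¹) ^ ν := Real.rpow_le_rpow hXpos hXA hν0.le
    have p2 : ((4 : ℝ) * (ε n * η n)⁻¹) ^ ν = 4 ^ ν * ((ε n)⁻¹ ^ ν * (η n)⁻¹ ^ ν) := by
      rw [mul_inv, Real.mul_rpow (by norm_num) (by positivity),
        Real.mul_rpow (by positivity) (by positivity)]
    have p4 : ε n * (ε n)⁻¹ ^ ν = (ε n)⁻¹ ^ (ν - 1) := by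
      rw [Real.inv_rpow hεn.le, Real.inv_rpow hεn.le, ← Real.rpow_neg hεn.le,
        ← Real.rpow_neg hεn.le]
      have h5 := Real.rpow_add hεn 1 (-ν)
      rw [Real.rpow_one] at h5
      rw [← h5]; congr 1; ring
    have p5 : (ε n)⁻¹ ^ (ν - 1) ≤ (Q n ^ (β + τ)) ^ (ν - 1) :=
      Real.rpow_le_rpow (by positivity) hεi (by linarith)
    have p6 : (η n)⁻¹ ^ ν ≤ (Q n ^ τ) ^ ν := Real.rpow_le_rpow (by positivity) hηi hν0.le
    have p7 : (Q n ^ (β + τ)) ^ (ν - 1) * (Q n ^ τ) ^ ν = Q n ^ e₁ := by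
      rw [← Real.rpow_mul hQn.le, ← Real.rpow_mul hQn.le, ← Real.rpow_add hQn, he₁def]
    have t1 : 2 * ε n * (X n + 1) ^ ν ≤ 2 * 4 ^ ν * Q n ^ e₁ := by
      calc 2 * ε n * (X n + 1) ^ ν
          ≤ 2 * ε n * (4 ^ ν * ((ε n)⁻¹ ^ ν * (η n)⁻¹ ^ ν)) := by
            rw [← p2]; exact mul_le_mul_of_nonneg_left p1 (by positivity)
        _ = 2 * 4 ^ ν * ((ε n * (ε n)⁻¹ ^ ν) * (η n)⁻¹ ^ ν) := by ring
        _ = 2 * 4 ^ ν * ((ε n)⁻¹ ^ (ν - 1) * (η n)⁻¹ ^ ν) := by rw [p4]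
        _ ≤ 2 * 4 ^ ν * ((Q n ^ (β + τ)) ^ (ν - 1) * (Q n ^ τ) ^ ν) := by
            refine mul_le_mul_of_nonneg_left ?_ (by positivity)
            exact mul_le_mul p5 p6 (by positivity) (by positivity)
        _ = 2 * 4 ^ ν * Q n ^ e₁ := by rw [p7]
    have hQe1 : (0 : ℝ) ≤ Q n ^ e₁ := Real.rpow_nonneg hQn.le _
    have hQe2 : (0 : ℝ) ≤ Q n ^ e₂ := Real.rpow_nonneg hQn.le _
    have c1 : 2 * 4 ^ ν * Q n ^ e₁ ≤ Q n ^ ((1 : ℝ) - τ) / 24 := by linarith only [h1]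
    have c2 : 4 * Q n ^ e₂ ≤ Q n ^ ((1 : ℝ) - τ) / 24 := by linarith only [h2]
    linarith only [t1, t2, c1, c2, hqη]
  have G6 : ∀ᶠ n in atTop, Y n + 1 ≤ Q n * η n / 12 := by
    filter_upwards [E_εinv, E_ηinv, F0, F1, F2, H3, E_Qη, hQ.eventually_gt_atTop 0]
      with n hεi hηi h0 hε1 hη1 h3 hqη hQn
    have hεn := hεpos n
    have hηn := hηpos n
    have hAb : (ε n * η n)⁻¹ ≤ Q n ^ e₂ := by
      rw [mul_inv, he₂def, show β + 2 * τ = (β + τ) + τ by ring, Real.rpow_add hQn]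
      exact mul_le_mul hεi hηi (by positivity) (Real.rpow_nonneg hQn.le _)
    have hWb : W n ≤ 6 * Q n ^ (1 + e₂) := by
      simp only [hWdef]
      rw [Real.rpow_add hQn, Real.rpow_one]
      linarith only [mul_le_mul_of_nonneg_left hAb hQn.le]
    have hW0 : (0 : ℝ) ≤ W n := by simp only [hWdef]; positivity
    have hYb : Y n ≤ 6 ^ κ * Q n ^ e₃ := by
      simp only [hYdef]
      calc W n ^ κ ≤ (6 * Q n ^ (1 + e₂)) ^ κ := Real.rpow_le_rpow hW0 hWb hκpos.le
        _ = 6 ^ κ * (Q n ^ (1 + e₂)) ^ κ :=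
            Real.mul_rpow (by norm_num) (Real.rpow_nonneg hQn.le _)
        _ = 6 ^ κ * Q n ^ e₃ := by rw [← Real.rpow_mul hQn.le, ← he₃def]
    have he₃0 : (0 : ℝ) ≤ e₃ := by
      rw [he₃def]; exact mul_nonneg (by linarith) hκpos.le
    have hQe3 : 1 ≤ Q n ^ e₃ := Real.one_le_rpow h0 he₃0
    have h6κ : (0 : ℝ) ≤ (6 : ℝ) ^ κ := Real.rpow_nonneg (by norm_num) _
    have hY1b : Y n + 1 ≤ (6 ^ κ + 1) * Q n ^ e₃ := by
      nlinarith [hYb, hQe3, h6κ]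
    linarith only [hY1b, h3, hqη]
  -- Step 6 : final assembly
  filter_upwards [G1, G2, G3, G4, G5, G6, F2, hQ.eventually_gt_atTop 0, F0]
    with n hg1 hg2 hg3 hg4 hg5 hg6 hη1 hQn h0
  have hεn := hεpos n
  have hηn := hηpos n
  have hνne : ν ≠ 0 := ne_of_gt hν0
  have hν1' : (0 : ℝ) < ν - 1 := by linarith
  have hν1ne : ν - 1 ≠ 0 := ne_of_gt hν1'
  obtain ⟨qX, pX, hqX0, hqXle, hqXlow, hqXup⟩ := scale_pair ξ ν N c₀ hC hsmall (X n) hg1 hg2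
  obtain ⟨qY, pY, hqY0, hqYle, hqYlow, hqYup⟩ := scale_pair ξ ν N c₀ hC hsmall (Y n) hg3 hg4
  have hqXR : (0 : ℝ) < (qX : ℝ) := by exact_mod_cast hqX0
  have hqYR : (0 : ℝ) < (qY : ℝ) := by exact_mod_cast hqY0
  have hθXpos : 0 < |(qX : ℝ) * ξ - pX| := lt_trans (Real.rpow_pos_of_pos hqXR _) hqXlow
  have hθX0 : (qX : ℝ) * ξ - pX ≠ 0 := by
    intro h
    rw [h, abs_zero] at hθXpos
    exact lt_irrefl 0 hθXpos
  have hXval : 1 / X n = ε n * η n / 3 := by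
    simp only [hXdef]
    rw [one_div, mul_inv, inv_inv]
    ring
  have hXinv : 1 / (X n + 1) ≤ ε n * η n / 3 := by
    rw [← hXval]
    exact one_div_le_one_div_of_le (by linarith) (by linarith)
  have hθXs : |(qX : ℝ) * ξ - pX| ≤ ε n * η n / 3 := le_trans hqXup hXinv
  have hXcost : (2 * ε n / |(qX : ℝ) * ξ - pX| + 1) * qX ≤ Q n * η n / 12 := by
    have h1 : ((qX : ℝ) ^ ((1 : ℝ) - ν)) = ((qX : ℝ) ^ (ν - 1))⁻¹ := by
      rw [← Real.rpow_neg hqXR.le]; congr 1; ring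
    have h2 : (0 : ℝ) < (qX : ℝ) ^ (ν - 1) := Real.rpow_pos_of_pos hqXR _
    have hinvθ : |(qX : ℝ) * ξ - pX|⁻¹ ≤ (qX : ℝ) ^ (ν - 1) := by
      rw [h1] at hqXlow
      exact (inv_lt_of_inv_lt₀ h2 hqXlow).le
    have hstep : (qX : ℝ) ^ (ν - 1) * (qX : ℝ) = (qX : ℝ) ^ ν := by
      have h5 := Real.rpow_add hqXR (ν - 1) 1
      rw [Real.rpow_one] at h5
      rw [← h5]; congr 1; ring
    have hqXν : (qX : ℝ) ^ ν ≤ (X n + 1) ^ ν := Real.rpow_le_rpow hqXR.le hqXle hν0.le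
    calc (2 * ε n / |(qX : ℝ) * ξ - pX| + 1) * qX
        = 2 * ε n * |(qX : ℝ) * ξ - pX|⁻¹ * qX + qX := by rw [div_eq_mul_inv]; ring
      _ ≤ 2 * ε n * (qX : ℝ) ^ (ν - 1) * qX + (X n + 1) := by gcongr
      _ = 2 * ε n * ((qX : ℝ) ^ (ν - 1) * qX) + (X n + 1) := by ring
      _ = 2 * ε n * (qX : ℝ) ^ ν + (X n + 1) := by rw [hstep]
      _ ≤ 2 * ε n * (X n + 1) ^ ν + (X n + 1) :=
          add_le_add_left (mul_le_mul_of_nonneg_left hqXν (by positivity)) _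
      _ ≤ Q n * η n / 12 := hg5
  have hYq : (qY : ℝ) ≤ Q n * η n / 12 := le_trans hqYle hg6
  have hYdisp : ((Q n + Q n * η n / 6) / qY + 1) * |(qY : ℝ) * ξ - pY| ≤ ε n * η n / 3 := by
    have habsY : (0 : ℝ) ≤ |(qY : ℝ) * ξ - pY| := abs_nonneg _
    have step1 : (Q n + Q n * η n / 6) / qY + 1 ≤ 2 * Q n / qY := by
      rw [div_add' _ _ _ (ne_of_gt hqYR)]
      have hQη : Q n * η n ≤ Q n := by
        have h7 := mul_le_mul_of_nonneg_left hη1 hQn.le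
        linarith only [h7]
      have hnum : Q n + Q n * η n / 6 + 1 * qY ≤ 2 * Q n := by
        linarith only [hQη, hYq, hQn]
      exact (div_le_div_iff_of_pos_right hqYR).mpr hnum
    have step2 : Y n + 1 < (qY : ℝ) ^ (ν - 1) := by
      have h1 : ((qY : ℝ) ^ ((1 : ℝ) - ν)) = ((qY : ℝ) ^ (ν - 1))⁻¹ := by
        rw [← Real.rpow_neg hqYR.le]; congr 1; ring
      have h2 : (0 : ℝ) < (qY : ℝ) ^ (ν - 1) := Real.rpow_pos_of_pos hqYR _
      have h3 : ((qY : ℝ) ^ (ν - 1))⁻¹ < (Y n + 1)⁻¹ := by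
        rw [← h1]
        refine lt_of_lt_of_le hqYlow ?_
        rwa [one_div] at hqYup
      exact (inv_lt_inv₀ h2 (by linarith : (0 : ℝ) < Y n + 1)).mp h3
    have hY1 : (0 : ℝ) < Y n + 1 := by linarith
    have step3 : (Y n + 1) ^ ((1 : ℝ) / (ν - 1)) ≤ (qY : ℝ) := by
      have h4 := Real.rpow_le_rpow hY1.le step2.le (le_of_lt (one_div_pos.mpr hν1'))
      have h5 : ((qY : ℝ) ^ (ν - 1)) ^ ((1 : ℝ) / (ν - 1)) = (qY : ℝ) := by
        rw [← Real.rpow_mul hqYR.le, mul_one_div, div_self hν1ne, Real.rpow_one]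
      rwa [h5] at h4
    have hZν : (Y n + 1) ^ ((1 : ℝ) / (ν - 1)) * (Y n + 1) = (Y n + 1) ^ (ν / (ν - 1)) := by
      have h6 := Real.rpow_add hY1 (1 / (ν - 1)) 1
      rw [Real.rpow_one] at h6
      rw [← h6]; congr 1; field_simp; ring
    have hW0 : (0 : ℝ) ≤ W n := by simp only [hWdef]; positivity
    have hWpos : (0 : ℝ) < W n := by simp only [hWdef]; positivity
    have h7 : Y n ^ (ν / (ν - 1)) = W n := by
      simp only [hYdef]
      rw [← Real.rpow_mul hW0]
      rw [show κ * (ν / (ν - 1)) = 1 by rw [hκdef]; field_simp, Real.rpow_one]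
    have hWY : W n ≤ (Y n + 1) ^ (ν / (ν - 1)) := by
      rw [← h7]
      exact Real.rpow_le_rpow (by linarith) (by linarith) (by positivity)
    have hfinal_eq : 2 * Q n / W n = ε n * η n / 3 := by
      have hne1 : ε n * η n ≠ 0 := ne_of_gt (hεηpos n)
      have hne2 : Q n ≠ 0 := ne_of_gt hQn
      simp only [hWdef]
      rw [div_eq_div_iff (by positivity) (by norm_num : (3 : ℝ) ≠ 0)]
      field_simp
      ring
    have hZpos : (0 : ℝ) < (Y n + 1) ^ ((1 : ℝ) / (ν - 1)) := Real.rpow_pos_of_pos hY1 _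
    calc ((Q n + Q n * η n / 6) / qY + 1) * |(qY : ℝ) * ξ - pY|
        ≤ (2 * Q n / qY) * |(qY : ℝ) * ξ - pY| := mul_le_mul_of_nonneg_right step1 habsY
      _ = 2 * Q n * |(qY : ℝ) * ξ - pY| / qY := by ring
      _ ≤ 2 * Q n * (1 / (Y n + 1)) / ((Y n + 1) ^ ((1 : ℝ) / (ν - 1))) := by
          gcongr
      _ = 2 * Q n / ((Y n + 1) ^ ((1 : ℝ) / (ν - 1)) * (Y n + 1)) := by
          rw [mul_one_div, div_div, mul_comm (Y n + 1)]
      _ = 2 * Q n / (Y n + 1) ^ (ν / (ν - 1)) := by rw [hZν]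
      _ ≤ 2 * Q n / W n := by
          apply div_le_div_of_nonneg_left (by positivity) hWpos hWY
      _ = ε n * η n / 3 := hfinal_eq
  exact construction ξ (Q n) (ε n) (η n) hQn hεn hηn hη1 qX pX hqX0 hθX0 hθXs hXcost
    qY pY hqY0 hYq hYdisp
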